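/- Let C be a d-dimensional copula whose partial derivatives ∂_p C exist and are continuous on U_p = {u ∈ [0,1]^d : u_p ∈ (0,1)} for each p. Extend ∂_p C by 0 to the set {u : u_p ∈ {0,1}}. Let α : [0,1]^d → ℝ be continuous with α(1,...,1) = 0 and α(u) = 0 whenever some coordinate of u equals 0. Then the function u ↦ α(u) − Σ_{p=1}^d ∂_pC(u) · α(u^{(p)}), where u^{(p)} = (1,...,1,u_p,1,...,1), is continuous on [0,1]^d. -/

import Mathlib

open MeasureTheory Set Topology Filter

/-- A `d`-dimensional copula. -/
def IsCopula (d : ℕ) (C : (Fin d → ℝ) → ℝ) : Prop :=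
  ∃ μ : Measure (Fin d → ℝ), IsProbabilityMeasure μ ∧
    (∀ p : Fin d, ∀ t ∈ Icc (0:ℝ) 1, μ {x | x p ≤ t} = ENNReal.ofReal t) ∧
    (∀ u, C u = (μ {x | ∀ p, x p ≤ u p}).toReal)

/-- The unit cube `[0,1]^d`. -/
def cube (d : ℕ) : Set (Fin d → ℝ) := Set.univ.pi fun _ => Icc 0 1

/-- `u^{(p)}`: all coordinates `1` except the `p`-th, which is `u p`. -/
def margVec {d : ℕ} (p : Fin d) (s : ℝ) : Fin d → ℝ := Function.update (fun _ => 1) p s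

/-- Monotonicity and Lipschitz bound for a copula in one coordinate. -/
lemma copula_coord_bound {d : ℕ} {C : (Fin d → ℝ) → ℝ} (hC : IsCopula d C)
    (u : Fin d → ℝ) (p : Fin d) {s t : ℝ} (ht : 0 ≤ t) (hts : t ≤ s) (hs : s ≤ 1) :
    C (Function.update u p t) ≤ C (Function.update u p s) ∧
      C (Function.update u p s) ≤ C (Function.update u p t) + (s - t) := by
  obtain ⟨μ, hprob, hmarg, hCdef⟩ := hC
  set A : Set (Fin d → ℝ) := {x | ∀ q, x q ≤ Function.update u p s q} with hA
  set B : Set (Fin d → ℝ) := {x | ∀ q, x q ≤ Function.update u p t q} with hB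
  have hBA : B ⊆ A := by
    intro x hx q
    rcases eq_or_ne q p with rfl | hq
    · simpa using (hx q).trans (by simpa using hts)
    · simpa [Function.update_of_ne hq] using hx q
  have hmeasB : MeasurableSet B := by
    have : B = Set.univ.pi fun q => Iic (Function.update u p t q) := by
      ext x; simp [hB, Set.mem_pi, Pi.le_def]
    rw [this]
    exact MeasurableSet.univ_pi fun q => measurableSet_Iic
  have hdiff : A \ B ⊆ {x | x p ≤ s} \ {x | x p ≤ t} := by
    intro x ⟨hxA, hxB⟩
    constructor
    · have := hxA p; simpa using this
    · intro hxp
      apply hxB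
      intro q
      rcases eq_or_ne q p with rfl | hq
      · simpa using hxp
      · simpa [Function.update_of_ne hq] using hxA q
  have hsub : {x : Fin d → ℝ | x p ≤ t} ⊆ {x | x p ≤ s} := fun x hx => le_trans hx hts
  have hmeas_t : MeasurableSet {x : Fin d → ℝ | x p ≤ t} := measurableSet_le (measurable_pi_apply p) measurable_const
  have hμdiff : μ (A \ B) ≤ ENNReal.ofReal (s - t) := by
    have h1 : μ (A \ B) ≤ μ ({x | x p ≤ s} \ {x | x p ≤ t}) := measure_mono hdiff
    have h2 : μ ({x : Fin d → ℝ | x p ≤ s} \ {x | x p ≤ t}) =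
        μ {x : Fin d → ℝ | x p ≤ s} - μ {x : Fin d → ℝ | x p ≤ t} :=
      measure_diff hsub hmeas_t.nullMeasurableSet (measure_ne_top μ _)
    rw [h2, hmarg p s ⟨ht.trans hts, hs⟩, hmarg p t ⟨ht, hts.trans hs⟩] at h1
    calc μ (A \ B) ≤ ENNReal.ofReal s - ENNReal.ofReal t := h1
      _ ≤ ENNReal.ofReal (s - t) := by
          rw [ENNReal.ofReal_sub s ht]
  have hAB : μ A ≤ μ B + ENNReal.ofReal (s - t) := by
    calc μ A = μ (B ∪ (A \ B)) := by rw [Set.union_diff_cancel hBA]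
      _ ≤ μ B + μ (A \ B) := measure_union_le _ _
      _ ≤ μ B + ENNReal.ofReal (s - t) := add_le_add_right hμdiff _
  have hfinA : μ A ≠ ⊤ := measure_ne_top μ _
  have hfinB : μ B ≠ ⊤ := measure_ne_top μ _
  rw [hCdef, hCdef]
  constructor
  · exact ENNReal.toReal_mono hfinA (measure_mono hBA)
  · have := ENNReal.toReal_mono (by finiteness) hAB
    rw [ENNReal.toReal_add hfinB ENNReal.ofReal_ne_top,
      ENNReal.toReal_ofReal (by linarith)] at this
    exact this

/-- The partial derivative is bounded in absolute value by 1 on all of the cube. -/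
lemma D_abs_le_one {d : ℕ} {C : (Fin d → ℝ) → ℝ} (hC : IsCopula d C)
    {D : Fin d → (Fin d → ℝ) → ℝ}
    (hDderiv : ∀ p : Fin d, ∀ u ∈ cube d, u p ∈ Ioo (0:ℝ) 1 →
      HasDerivWithinAt (fun s => C (Function.update u p s)) (D p u) (Icc (0:ℝ) 1) (u p))
    (hDbdry : ∀ p : Fin d, ∀ u, (u p = 0 ∨ u p = 1) → D p u = 0)
    (p : Fin d) (u : Fin d → ℝ) (hu : u ∈ cube d) : |D p u| ≤ 1 := by
  have hup : u p ∈ Icc (0:ℝ) 1 := hu p (Set.mem_univ p)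
  rcases eq_or_ne (u p) 0 with h0 | h0
  · rw [hDbdry p u (Or.inl h0)]; norm_num
  rcases eq_or_ne (u p) 1 with h1 | h1
  · rw [hDbdry p u (Or.inr h1)]; norm_num
  have hIoo : u p ∈ Ioo (0:ℝ) 1 := ⟨lt_of_le_of_ne hup.1 (Ne.symm h0), lt_of_le_of_ne hup.2 h1⟩
  have hder := hDderiv p u hu hIoo
  rw [hasDerivWithinAt_iff_tendsto_slope] at hder
  -- the filter is nontrivial
  have hIccnhds : Icc (0:ℝ) 1 ∈ 𝓝 (u p) := Icc_mem_nhds hIoo.1 hIoo.2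
  have hfil : 𝓝[Icc (0:ℝ) 1 \ {u p}] (u p) = 𝓝[≠] (u p) := by
    rw [diff_eq, inter_comm]
    exact nhdsWithin_inter_of_mem' (mem_nhdsWithin_of_mem_nhds hIccnhds)
  rw [hfil] at hder
  have habs : Filter.Tendsto (fun s => |slope (fun s => C (Function.update u p s)) (u p) s|)
      (𝓝[≠] (u p)) (𝓝 |D p u|) := hder.abs
  refine le_of_tendsto habs ?_
  have hmem : Icc (0:ℝ) 1 \ {u p} ∈ 𝓝[≠] (u p) := by
    rw [← hfil]; exact self_mem_nhdsWithin
  filter_upwards [hmem] with s hsmem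
  obtain ⟨hsI, hsne⟩ := hsmem
  have hne : s ≠ u p := hsne
  have hden : (0:ℝ) < |s - u p| := abs_pos.2 (sub_ne_zero.2 hne)
  rw [slope_def_field, abs_div, div_le_one hden]
  rcases lt_or_gt_of_ne hne with hlt | hgt
  · have hb := copula_coord_bound hC u p hsI.1 hlt.le hup.2
    have habs_den : |s - u p| = u p - s := by rw [abs_of_neg (by linarith)]; ring
    rw [habs_den, abs_le]
    constructor <;> [linarith [hb.2]; linarith [hb.1]]
  · have hb := copula_coord_bound hC u p hup.1 hgt.le hsI.2
    have habs_den : |s - u p| = s - u p := abs_of_pos (by linarith)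
    rw [habs_den, abs_le]
    constructor <;> [linarith [hb.1]; linarith [hb.2]]

/-- Under Segers' condition, the candidate limit
`u ↦ α(u) − Σ_p ∂_pC(u)·α(u^{(p)})` is continuous on `[0,1]^d`. -/
theorem candidate_limit_continuous
    (d : ℕ) (C : (Fin d → ℝ) → ℝ) (hC : IsCopula d C)
    (D : Fin d → (Fin d → ℝ) → ℝ)
    (hDderiv : ∀ p : Fin d, ∀ u ∈ cube d, u p ∈ Ioo (0:ℝ) 1 →
      HasDerivWithinAt (fun s => C (Function.update u p s)) (D p u) (Icc (0:ℝ) 1) (u p))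
    (hDcont : ∀ p : Fin d, ContinuousOn (D p) {u | u ∈ cube d ∧ u p ∈ Ioo (0:ℝ) 1})
    (hDbdry : ∀ p : Fin d, ∀ u, (u p = 0 ∨ u p = 1) → D p u = 0)
    (α : (Fin d → ℝ) → ℝ)
    (hαcont : ContinuousOn α (cube d))
    (hα1 : α (fun _ => 1) = 0)
    (hα0 : ∀ u, (∃ p, u p = 0) → α u = 0) :
    ContinuousOn (fun u => α u - ∑ p, D p u * α (margVec p (u p))) (cube d) := by
  have hDle := D_abs_le_one hC hDderiv hDbdry
  -- continuity of u ↦ α (margVec p (u p)) on the cube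
  have hβ : ∀ p : Fin d, ContinuousOn (fun u : Fin d → ℝ => α (margVec p (u p))) (cube d) := by
    intro p
    have hmcont : Continuous fun u : Fin d → ℝ => margVec p (u p) := by
      unfold margVec
      exact continuous_const.update p (continuous_apply p)
    apply hαcont.comp hmcont.continuousOn
    intro u hu q _
    rcases eq_or_ne q p with rfl | hq
    · simpa [margVec] using hu q (Set.mem_univ q)
    · simp [margVec, Function.update_of_ne hq]
  -- value of α at margVec at boundaries
  have hβ0 : ∀ p : Fin d, ∀ s : ℝ, (s = 0 ∨ s = 1) → α (margVec p s) = 0 := by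
    intro p s hs
    rcases hs with rfl | rfl
    · exact hα0 _ ⟨p, by simp [margVec]⟩
    · have : margVec p (1:ℝ) = fun _ => 1 := by
        funext q
        rcases eq_or_ne q p with rfl | hq
        · simp [margVec]
        · simp [margVec, Function.update_of_ne hq]
      rw [this]; exact hα1
  -- each summand is continuous on the cube
  have hterm : ∀ p : Fin d,
      ContinuousOn (fun u => D p u * α (margVec p (u p))) (cube d) := by
    intro p
    intro u₀ hu₀
    have hup : u₀ p ∈ Icc (0:ℝ) 1 := hu₀ p (Set.mem_univ p)
    by_cases hb : u₀ p = 0 ∨ u₀ p = 1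
    · -- boundary case: squeeze
      have hval : D p u₀ * α (margVec p (u₀ p)) = 0 := by
        rw [hDbdry p u₀ hb]; ring
      have htend : Filter.Tendsto (fun u => D p u * α (margVec p (u p)))
          (𝓝[cube d] u₀) (𝓝 0) := by
        apply squeeze_zero_norm' (a := fun u => |α (margVec p (u p))|)
        · filter_upwards [self_mem_nhdsWithin] with u hu
          rw [Real.norm_eq_abs, abs_mul]
          calc |D p u| * |α (margVec p (u p))| ≤ 1 * |α (margVec p (u p))| :=
                mul_le_mul_of_nonneg_right (hDle p u hu) (abs_nonneg _)
            _ = |α (margVec p (u p))| := one_mul _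
        · have := ((hβ p) u₀ hu₀).abs
          unfold ContinuousWithinAt at this
          simpa [hβ0 p (u₀ p) hb] using this
      have : ContinuousWithinAt (fun u => D p u * α (margVec p (u p))) (cube d) u₀ := by
        unfold ContinuousWithinAt
        simpa [hval] using htend
      exact this
    · -- interior case
      push_neg at hb
      have hIoo : u₀ p ∈ Ioo (0:ℝ) 1 :=
        ⟨lt_of_le_of_ne hup.1 (Ne.symm hb.1), lt_of_le_of_ne hup.2 hb.2⟩
      have hV : IsOpen {u : Fin d → ℝ | u p ∈ Ioo (0:ℝ) 1} :=
        isOpen_Ioo.preimage (continuous_apply p)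
      have hmem : cube d ∩ {u : Fin d → ℝ | u p ∈ Ioo (0:ℝ) 1} ∈ 𝓝[cube d] u₀ :=
        inter_mem_nhdsWithin _ (hV.mem_nhds hIoo)
      have h1 : ContinuousWithinAt (D p) (cube d ∩ {u | u p ∈ Ioo (0:ℝ) 1}) u₀ :=
        hDcont p u₀ ⟨hu₀, hIoo⟩
      exact (h1.mono_of_mem_nhdsWithin hmem).mul (hβ p u₀ hu₀)
  exact hαcont.sub (continuousOn_finset_sum Finset.univ fun p _ => hterm p)
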